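/- Let B be an alternating bilinear form on the finite 𝔽₂-vector space V, let Q denote the set of quadratic refinements of B, let Z : V → ℂ be any function, and for q ∈ Q set D(q) = ∑_{x ∈ V} (−1)^{q(x)} Z(x). Then the values of Z are recovered by the inversion formula Z(x) = (Fintype.card V)⁻¹ ∑_{q ∈ Q} (−1)^{q(x)} D(q) for every x ∈ V. (This is the formula Z_ξ = ±2^{−2g} ∑_η (−1)^{q_η(ξ)} det K_η extracting the homology-class-ξ part of the dimer partition function from the twisted Kasteleyn determinants.) -/

import Mathlib

open scoped Classical

lemma quadRef_exists {V : Type*} [AddCommGroup V] [Module (ZMod 2) V] [Fintype V]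
    (B : V →ₗ[ZMod 2] V →ₗ[ZMod 2] ZMod 2) (halt : ∀ x, B x x = 0) :
    ∃ q : V → ZMod 2, ∀ x y, q (x+y) = q x + q y + B x y := by
  have : Module.Finite (ZMod 2) V := by infer_instance
  let b := Module.finBasis (ZMod 2) V
  set n := Module.finrank (ZMod 2) V
  set uT := Finset.univ.filter (fun p : Fin n × Fin n => p.1 < p.2) with huT
  have hBxy : ∀ x y : V, B x y = ∑ i, ∑ j, b.repr x i * b.repr y j * B (b i) (b j) := by
    intro x y
    conv_lhs => rw [← b.sum_repr x, ← b.sum_repr y]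
    simp only [map_sum, Finset.sum_apply, LinearMap.sum_apply, map_smul, smul_eq_mul,
      LinearMap.smul_apply, Finset.mul_sum]
    rw [Finset.sum_comm]
    exact Finset.sum_congr rfl fun i _ => Finset.sum_congr rfl fun j _ => by ring
  have hsym : ∀ u v : V, B u v = B v u := by
    intro u v
    have h := halt (u + v)
    simp only [map_add, LinearMap.add_apply, halt u, halt v] at h
    have key : ∀ a c : ZMod 2, 0 + a + (c + 0) = 0 → c = a := by decide
    exact key _ _ h
  have hsplit : ∀ f : Fin n × Fin n → ZMod 2, (∀ i, f (i, i) = 0) →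
      ∑ p : Fin n × Fin n, f p = ∑ p ∈ uT, f p + ∑ p ∈ uT, f p.swap := by
    intro f hdiag
    rw [← Finset.sum_filter_add_sum_filter_not Finset.univ (fun p : Fin n × Fin n => p.1 < p.2) f]
    congr 1
    rw [show Finset.univ.filter (fun p : Fin n × Fin n => ¬ p.1 < p.2)
        = Finset.univ.filter (fun p : Fin n × Fin n => p.2 < p.1)
          ∪ Finset.univ.filter (fun p : Fin n × Fin n => p.1 = p.2) from ?_]
    · rw [Finset.sum_union ?_]
      · rw [show (∑ p ∈ Finset.univ.filter (fun p : Fin n × Fin n => p.1 = p.2), f p) = 0 from ?_]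
        · rw [add_zero]
          refine Finset.sum_nbij' (fun p => p.swap) (fun p => p.swap) ?_ ?_ ?_ ?_ ?_
          · intro p hp
            simp only [Finset.mem_filter, Finset.mem_univ, true_and, huT,
              Prod.fst_swap, Prod.snd_swap] at hp ⊢
            exact hp
          · intro p hp
            simp only [Finset.mem_filter, Finset.mem_univ, true_and, huT,
              Prod.fst_swap, Prod.snd_swap] at hp ⊢
            exact hp
          · intro p _; simp
          · intro p _; simp
          · intro p _; rfl
        · refine Finset.sum_eq_zero fun p hp => ?_
          simp only [Finset.mem_filter] at hp
          have : p = (p.1, p.1) := by ext <;> simp [hp.2.symm]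
          rw [this]; exact hdiag p.1
      · refine Finset.disjoint_left.mpr fun p hp hp' => ?_
        simp only [Finset.mem_filter] at hp hp'
        omega
    · ext p
      simp only [Finset.mem_filter, Finset.mem_union, Finset.mem_univ, true_and]
      omega
  refine ⟨fun x => ∑ p ∈ uT, b.repr x p.1 * b.repr x p.2 * B (b p.1) (b p.2), fun x y => ?_⟩
  dsimp only
  have expand : ∀ p ∈ uT, b.repr (x+y) p.1 * b.repr (x+y) p.2 * B (b p.1) (b p.2)
      = b.repr x p.1 * b.repr x p.2 * B (b p.1) (b p.2)
        + b.repr y p.1 * b.repr y p.2 * B (b p.1) (b p.2)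
        + (b.repr x p.1 * b.repr y p.2 * B (b p.1) (b p.2)
           + (fun p : Fin n × Fin n => b.repr x p.1 * b.repr y p.2 * B (b p.1) (b p.2)) p.swap) := by
    intro p _
    simp only [map_add, Finsupp.add_apply, Prod.fst_swap, Prod.snd_swap]
    rw [hsym (b p.2) (b p.1)]
    ring
  rw [Finset.sum_congr rfl expand, Finset.sum_add_distrib, Finset.sum_add_distrib,
    Finset.sum_add_distrib]
  congr 1
  have hs := hsplit (fun p => b.repr x p.1 * b.repr y p.2 * B (b p.1) (b p.2))
    (fun i => by simp [halt])
  rw [hBxy x y]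
  exact hs.symm.trans (Fintype.sum_prod_type _)

lemma quadRef_card {V : Type*} [AddCommGroup V] [Module (ZMod 2) V] [Fintype V]
    (B : V →ₗ[ZMod 2] V →ₗ[ZMod 2] ZMod 2)
    (q₀ : V → ZMod 2) (hq₀ : ∀ x y, q₀ (x+y) = q₀ x + q₀ y + B x y) :
    Fintype.card {q : V → ZMod 2 // ∀ x y, q (x + y) = q x + q y + B x y}
      = Fintype.card V := by
  have : Module.Finite (ZMod 2) V := by infer_instance
  have hq00 : q₀ 0 = 0 := by
    have := hq₀ 0 0
    simp only [add_zero, map_zero, LinearMap.zero_apply] at this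
    have key : ∀ a : ZMod 2, a = a + a → a = 0 := by decide
    exact key _ this
  let e : {q : V → ZMod 2 // ∀ x y, q (x + y) = q x + q y + B x y}
      ≃ Module.Dual (ZMod 2) V :=
  { toFun := fun q =>
      { toFun := fun v => q.1 v + q₀ v
        map_add' := by
          intro a c
          rw [q.2, hq₀]
          have key : ∀ x1 x2 y1 y2 t : ZMod 2, x1 + x2 + t + (y1 + y2 + t)
              = x1 + y1 + (x2 + y2) := by decide
          exact key _ _ _ _ _
        map_smul' := by
          intro c v
          have hq0 : q.1 0 = 0 := by
            have := q.2 0 0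
            simp only [add_zero, map_zero, LinearMap.zero_apply] at this
            have key : ∀ a : ZMod 2, a = a + a → a = 0 := by decide
            exact key _ this
          rcases (by decide : ∀ c : ZMod 2, c = 0 ∨ c = 1) c with rfl | rfl <;> simp [hq0, hq00] }
    invFun := fun f => ⟨fun v => q₀ v + f v, by
      intro a c
      dsimp only
      rw [hq₀, map_add]
      have key : ∀ x1 x2 y1 y2 t : ZMod 2, x1 + y1 + t + (x2 + y2)
          = x1 + x2 + (y1 + y2) + t := by decide
      exact key _ _ _ _ _⟩
    left_inv := by
      intro q
      ext v
      show q₀ v + (q.1 v + q₀ v) = q.1 v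
      have key : ∀ a t : ZMod 2, t + (a + t) = a := by decide
      exact key _ _
    right_inv := by
      intro f
      ext v
      show q₀ v + f v + q₀ v = f v
      have key : ∀ a t : ZMod 2, t + a + t = a := by decide
      exact key _ _ }
  let b := Module.finBasis (ZMod 2) V
  have e2 : Module.Dual (ZMod 2) V ≃ V :=
    (b.dualBasis.equivFun.toEquiv.trans b.equivFun.toEquiv.symm)
  rw [← Nat.card_eq_fintype_card, ← Nat.card_eq_fintype_card,
    Nat.card_congr (e.trans e2)]

/-- **Inversion formula for spin-structure sums.**
Let `B` be an alternating bilinear form on a finite `𝔽₂`-vector space `V`, `Q` the set of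
quadratic refinements of `B`, and `Z : V → ℂ`. Setting `D q = ∑ x, (-1)^(q x) * Z x`, the
values of `Z` are recovered as `Z x = (card V)⁻¹ * ∑ q, (-1)^(q x) * D q`. -/
theorem quadRefinement_inversion {V : Type*} [AddCommGroup V] [Module (ZMod 2) V]
    [Fintype V] (B : V →ₗ[ZMod 2] V →ₗ[ZMod 2] ZMod 2)
    (halt : ∀ x : V, B x x = 0) (Z : V → ℂ)
    (D : {q : V → ZMod 2 // ∀ x y, q (x + y) = q x + q y + B x y} → ℂ)
    (hD : ∀ q, D q = ∑ x : V, ((-1 : ℂ) ^ (q.1 x).val) * Z x) :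
    ∀ x : V, Z x = (Fintype.card V : ℂ)⁻¹ *
      ∑ q : {q : V → ZMod 2 // ∀ x y, q (x + y) = q x + q y + B x y},
        ((-1 : ℂ) ^ (q.1 x).val) * D q := by
  intro x
  let QT := {q : V → ZMod 2 // ∀ x y, q (x + y) = q x + q y + B x y}
  obtain ⟨q₀, hq₀⟩ := quadRef_exists B halt
  have chi_add : ∀ a b : ZMod 2, ((-1:ℂ))^((a+b).val) = (-1)^a.val * (-1)^b.val := by
    intro a b
    rcases (by decide : ∀ c : ZMod 2, c = 0 ∨ c = 1) a with rfl | rfl <;>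
      rcases (by decide : ∀ c : ZMod 2, c = 0 ∨ c = 1) b with rfl | rfl <;>
      norm_num [show ((2:ZMod 2)).val = 0 from rfl, show ((1:ZMod 2)).val = 1 from rfl]
  have chi_one : ∀ a : ZMod 2, ((-1:ℂ))^((a+1).val) = -(-1)^a.val := by
    intro a
    rcases (by decide : ∀ c : ZMod 2, c = 0 ∨ c = 1) a with rfl | rfl <;>
      norm_num [show ((2:ZMod 2)).val = 0 from rfl, show ((1:ZMod 2)).val = 1 from rfl]
  have hxx : ∀ v : V, v + v = 0 := by
    intro v
    rw [← two_smul (ZMod 2) v, show (2:ZMod 2) = 0 from rfl, zero_smul]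
  have hq0 : ∀ q : QT, q.1 0 = 0 := by
    intro q
    have := q.2 0 0
    simp only [add_zero, map_zero, LinearMap.zero_apply] at this
    have key : ∀ a : ZMod 2, a = a + a → a = 0 := by decide
    exact key _ this
  have horth : ∀ z : V, z ≠ 0 → ∑ q : QT, ((-1:ℂ))^((q.1 z).val) = 0 := by
    intro z hz
    have hfex : ∃ f : Module.Dual (ZMod 2) V, f z = 1 := by
      have h := (Module.forall_dual_apply_eq_zero_iff (ZMod 2) z).not.mpr hz
      push_neg at h
      obtain ⟨f, hf⟩ := h
      exact ⟨f, (by decide : ∀ a : ZMod 2, a ≠ 0 → a = 1) _ hf⟩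
    obtain ⟨f, hf⟩ := hfex
    have key : ∀ x1 x2 t u1 u2 : ZMod 2, x1 + x2 + t + (u1 + u2)
        = x1 + u1 + (x2 + u2) + t := by decide
    have keyinv : ∀ a t : ZMod 2, a + t + t = a := by decide
    let e : QT ≃ QT :=
    { toFun := fun q => ⟨fun v => q.1 v + f v, by
        intro a c
        dsimp only
        rw [q.2, map_add]
        exact key _ _ _ _ _⟩
      invFun := fun q => ⟨fun v => q.1 v + f v, by
        intro a c
        dsimp only
        rw [q.2, map_add]
        exact key _ _ _ _ _⟩
      left_inv := fun q => Subtype.ext (funext fun v => keyinv _ _)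
      right_inv := fun q => Subtype.ext (funext fun v => keyinv _ _) }
    have h1 : ∑ q : QT, ((-1:ℂ))^(((e q).1 z).val) = ∑ q : QT, ((-1:ℂ))^((q.1 z).val) :=
      Equiv.sum_comp e (fun q : QT => ((-1:ℂ))^((q.1 z).val))
    have h2 : ∀ q : QT, ((-1:ℂ))^(((e q).1 z).val) = -((-1:ℂ))^((q.1 z).val) := by
      intro q
      show ((-1:ℂ))^((q.1 z + f z).val) = _
      rw [hf, chi_one]
    rw [Finset.sum_congr rfl (fun q _ => h2 q), Finset.sum_neg_distrib] at h1
    linear_combination (-1/2 : ℂ) * h1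
  have hcard := quadRef_card B q₀ hq₀
  have hinner : ∀ y : V, (∑ q : QT, ((-1:ℂ))^((q.1 x).val) * ((-1:ℂ))^((q.1 y).val))
      = if y = x then (Fintype.card V : ℂ) else 0 := by
    intro y
    have step : ∀ q : QT, ((-1:ℂ))^((q.1 x).val) * ((-1:ℂ))^((q.1 y).val)
        = ((-1:ℂ))^((B x y).val) * ((-1:ℂ))^((q.1 (x+y)).val) := by
      intro q
      rw [← chi_add, ← chi_add]
      have key : ∀ a b c d : ZMod 2, d = a + b + c → a + b = c + d := by decide
      exact congrArg (fun t : ZMod 2 => ((-1:ℂ))^t.val) (key _ _ _ _ (q.2 x y))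
    rw [Finset.sum_congr rfl (fun q _ => step q), ← Finset.mul_sum]
    by_cases h : y = x
    · subst h
      rw [if_pos rfl, halt y, hxx y]
      have h1 : ∀ q : QT, ((-1:ℂ))^((q.1 0).val) = 1 := by
        intro q
        rw [hq0 q]
        norm_num [ZMod.val_zero]
      rw [Finset.sum_congr rfl (fun q _ => h1 q), Finset.sum_const]
      simp only [ZMod.val_zero, pow_zero, one_mul, smul_eq_mul, mul_one, Finset.card_univ, hcard]
      simp
      exact hcard
    · have hxy : x + y ≠ 0 := by
        intro h0
        apply h
        have h2 := congrArg (fun v => x + v) h0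
        simp only [← add_assoc, hxx x, zero_add, add_zero] at h2
        exact h2
      rw [if_neg h, horth (x+y) hxy, mul_zero]
  have main : (∑ q : QT, ((-1:ℂ))^((q.1 x).val) * D q) = (Fintype.card V : ℂ) * Z x := by
    simp_rw [hD, Finset.mul_sum]
    rw [Finset.sum_comm]
    have h3 : ∀ y : V, (∑ q : QT, ((-1:ℂ))^((q.1 x).val) * (((-1:ℂ))^((q.1 y).val) * Z y))
        = if y = x then (Fintype.card V : ℂ) * Z y else 0 := by
      intro y
      have : (∑ q : QT, ((-1:ℂ))^((q.1 x).val) * (((-1:ℂ))^((q.1 y).val) * Z y))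
          = (∑ q : QT, ((-1:ℂ))^((q.1 x).val) * ((-1:ℂ))^((q.1 y).val)) * Z y := by
        rw [Finset.sum_mul]
        exact Finset.sum_congr rfl fun q _ => by ring
      rw [this, hinner y]
      split <;> ring
    rw [Finset.sum_congr rfl (fun y _ => h3 y),
      Finset.sum_ite_eq' Finset.univ x (fun y => (Fintype.card V : ℂ) * Z y)]
    simp
  have hc0 : (Fintype.card V : ℂ) ≠ 0 := Nat.cast_ne_zero.mpr Fintype.card_ne_zero
  rw [main, inv_mul_cancel_left₀ hc0]
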